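/- Let X, Y be n×n complex matrices satisfying XY − YX = I − 𝟙𝟙ᵗ, where 𝟙 is the all-ones column vector. Then for all x, z ∈ ℂ, det((xI − X)(zI − Y) − I) = det(xI − X)·det(zI − Y)·(1 − 𝟙ᵗ (xI − X)⁻¹ (zI − Y)⁻¹ 𝟙), whenever xI − X and zI − Y are invertible. -/

import Mathlib

open Matrix

/-- Under the Calogero–Moser commutation relation `X*Y - Y*X = 1 - 𝟙𝟙ᵗ`,
`det ((x - X)(z - Y) - 1) = det (x - X) det (z - Y) (1 - 𝟙ᵗ (x-X)⁻¹ (z-Y)⁻¹ 𝟙)`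
whenever `x - X` and `z - Y` are invertible. -/
theorem det_factorization_CM
    (n : ℕ) (X Y : Matrix (Fin n) (Fin n) ℂ)
    (hcomm : X * Y - Y * X = 1 - Matrix.of (fun _ _ => (1 : ℂ)))
    (x z : ℂ)
    (hx : IsUnit (x • (1 : Matrix (Fin n) (Fin n) ℂ) - X))
    (hz : IsUnit (z • (1 : Matrix (Fin n) (Fin n) ℂ) - Y)) :
    ((x • (1 : Matrix (Fin n) (Fin n) ℂ) - X) *
        (z • (1 : Matrix (Fin n) (Fin n) ℂ) - Y) - 1).det
      = (x • (1 : Matrix (Fin n) (Fin n) ℂ) - X).det *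
        (z • (1 : Matrix (Fin n) (Fin n) ℂ) - Y).det *
        (1 - dotProduct (fun _ => (1 : ℂ))
          (((x • (1 : Matrix (Fin n) (Fin n) ℂ) - X)⁻¹ *
            (z • (1 : Matrix (Fin n) (Fin n) ℂ) - Y)⁻¹).mulVec (fun _ => (1 : ℂ)))) := by
  set A := x • (1 : Matrix (Fin n) (Fin n) ℂ) - X with hA
  set B := z • (1 : Matrix (Fin n) (Fin n) ℂ) - Y with hB
  set J : Matrix (Fin n) (Fin n) ℂ := Matrix.of (fun _ _ => (1 : ℂ)) with hJ
  have hxdet : IsUnit A.det := (isUnit_iff_isUnit_det A).mp hx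
  have hzdet : IsUnit B.det := (isUnit_iff_isUnit_det B).mp hz
  have hAinv : A * A⁻¹ = 1 := mul_nonsing_inv A hxdet
  have hBinv : B * B⁻¹ = 1 := mul_nonsing_inv B hzdet
  -- commutation
  have h1 : A * B - B * A = 1 - J := by
    rw [hA, hB, ← hcomm]
    simp only [Matrix.mul_sub, Matrix.sub_mul, Matrix.smul_mul, Matrix.mul_smul,
      Matrix.one_mul, Matrix.mul_one, smul_smul]
    module
  have key : A * B - 1 = B * (A * (1 - A⁻¹ * (B⁻¹ * J))) := by
    have e1 : A * (1 - A⁻¹ * (B⁻¹ * J)) = A - B⁻¹ * J := by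
      rw [Matrix.mul_sub, Matrix.mul_one, ← Matrix.mul_assoc, hAinv, Matrix.one_mul]
    have e2 : B * (A - B⁻¹ * J) = B * A - J := by
      rw [Matrix.mul_sub, ← Matrix.mul_assoc, hBinv, Matrix.one_mul]
    rw [e1, e2]
    linear_combination (norm := noncomm_ring) h1
  -- the rank-one determinant
  have hone : ∀ i : Fin n, (fun _ => (1 : ℂ)) i = 1 := fun _ => rfl
  have hJ2 : J = Matrix.replicateCol Unit (fun _ => (1 : ℂ)) * Matrix.replicateRow Unit (fun _ => (1 : ℂ)) := by
    ext i j
    simp [hJ, Matrix.mul_apply]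
  have hcol : B⁻¹ * J = Matrix.replicateCol Unit ((B⁻¹) *ᵥ (fun _ => (1 : ℂ))) * Matrix.replicateRow Unit (fun _ => (1 : ℂ)) := by
    rw [hJ2, ← Matrix.mul_assoc, ← Matrix.replicateCol_mulVec]
  have hdet1 : (1 - A⁻¹ * (B⁻¹ * J)).det
      = 1 - dotProduct (fun _ => (1 : ℂ)) ((A⁻¹ * B⁻¹) *ᵥ (fun _ => (1 : ℂ))) := by
    rw [hcol, ← Matrix.mul_assoc, ← Matrix.replicateCol_mulVec, ← Matrix.mulVec_mulVec]
    rw [sub_eq_add_neg, ← Matrix.neg_mul]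
    have : -Matrix.replicateCol Unit (A⁻¹ *ᵥ B⁻¹ *ᵥ fun _ => (1:ℂ)) = Matrix.replicateCol Unit (-(A⁻¹ *ᵥ B⁻¹ *ᵥ fun _ => (1:ℂ))) := by
      ext i j; simp
    rw [this, Matrix.det_one_add_replicateCol_mul_replicateRow, dotProduct_neg, ← sub_eq_add_neg,
      Matrix.mulVec_mulVec]
  rw [key, Matrix.det_mul, Matrix.det_mul, hdet1]
  ring
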